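/- For any positive integers n ≥ k ≥ 1, the central factorial number of even indices U(n,k) equals the number of ordered pairs (π₁, π₂) of set partitions of {1,…,n} into k nonempty blocks such that the set of block minima of π₁ equals the set of block minima of π₂. -/

import Mathlib

open Polynomial

/-- The central factorial numbers of even indices `U n k = T (2n) (2k)`. -/
def U : ℕ → ℕ → ℕ
  | 0, 0 => 1
  | 0, _ + 1 => 0
  | _ + 1, 0 => 0
  | n + 1, k + 1 => U n k + (k + 1) ^ 2 * U n (k + 1)

/-- The set of minima of the blocks of a set partition of `{1, …, n}` (modelled on `Fin n`). -/
def blockMins {n : ℕ} (P : Finpartition (Finset.univ : Finset (Fin n))) : Finset (Fin n) :=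
  P.parts.attach.image fun B =>
    B.1.min' (Finset.nonempty_iff_ne_empty.2 (by simpa using P.ne_bot B.2))


/-- min-maps: idempotent, decreasing maps on `Fin n`. -/
def MM (n : ℕ) := {f : Fin n → Fin n // (∀ i, f i ≤ i) ∧ ∀ i, f (f i) = f i}

def fixSet {n : ℕ} (f : Fin n → Fin n) : Finset (Fin n) :=
  Finset.univ.filter fun i => f i = i

lemma mem_fixSet {n : ℕ} {f : Fin n → Fin n} {i : Fin n} :
    i ∈ fixSet f ↔ f i = i := by simp [fixSet]

noncomputable def minMap {n : ℕ} (P : Finpartition (Finset.univ : Finset (Fin n))) :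
    Fin n → Fin n := fun i =>
  (P.part i).min' ⟨i, P.mem_part (Finset.mem_univ i)⟩

lemma minMap_le {n : ℕ} (P : Finpartition (Finset.univ : Finset (Fin n))) (i : Fin n) :
    minMap P i ≤ i :=
  Finset.min'_le _ _ (P.mem_part (Finset.mem_univ i))

lemma minMap_mem_part {n : ℕ} (P : Finpartition (Finset.univ : Finset (Fin n))) (i : Fin n) :
    minMap P i ∈ P.part i :=
  Finset.min'_mem _ _

lemma part_minMap {n : ℕ} (P : Finpartition (Finset.univ : Finset (Fin n))) (i : Fin n) :
    P.part (minMap P i) = P.part i :=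
  P.part_eq_of_mem (P.part_mem.2 (Finset.mem_univ i)) (minMap_mem_part P i)

lemma minMap_idem {n : ℕ} (P : Finpartition (Finset.univ : Finset (Fin n))) (i : Fin n) :
    minMap P (minMap P i) = minMap P i := by
  unfold minMap
  congr 1
  exact part_minMap P i

noncomputable def toMM {n : ℕ} (P : Finpartition (Finset.univ : Finset (Fin n))) : MM n :=
  ⟨minMap P, minMap_le P, minMap_idem P⟩

instance {n : ℕ} (f : MM n) : DecidableRel (Setoid.ker f.1).r :=
  fun a b => decEq (f.1 a) (f.1 b)

def ofMM {n : ℕ} (f : MM n) : Finpartition (Finset.univ : Finset (Fin n)) :=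
  Finpartition.ofSetoid (Setoid.ker f.1)

lemma mem_part_ofMM {n : ℕ} (f : MM n) (a b : Fin n) :
    b ∈ (ofMM f).part a ↔ f.1 a = f.1 b :=
  Finpartition.mem_part_ofSetoid_iff_rel (s := Setoid.ker f.1)

lemma minMap_ofMM {n : ℕ} (f : MM n) : minMap (ofMM f) = f.1 := by
  funext i
  apply le_antisymm
  · exact Finset.min'_le _ _ ((mem_part_ofMM f i (f.1 i)).2 (f.2.2 i).symm)
  · apply Finset.le_min'
    intro b hb
    rw [mem_part_ofMM] at hb
    calc f.1 i = f.1 b := hb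
    _ ≤ b := f.2.1 b

lemma parts_eq_image_part {n : ℕ} (P : Finpartition (Finset.univ : Finset (Fin n))) :
    P.parts = Finset.univ.image P.part := by
  ext B
  constructor
  · intro hB
    obtain ⟨x, _, hx⟩ := P.part_surjOn hB
    exact Finset.mem_image.2 ⟨x, Finset.mem_univ x, hx⟩
  · rintro hB
    obtain ⟨x, -, rfl⟩ := Finset.mem_image.1 hB
    exact P.part_mem.2 (Finset.mem_univ x)

lemma finpartition_ext {n : ℕ} (P Q : Finpartition (Finset.univ : Finset (Fin n)))
    (h : ∀ i, P.part i = Q.part i) : P = Q := by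
  cases P; cases Q
  have : ∀ (R S : Finpartition (Finset.univ : Finset (Fin n))), R.parts = S.parts → R = S := by
    rintro ⟨p1, _, _, _⟩ ⟨p2, _, _, _⟩ h
    simpa using h
  apply this
  rw [parts_eq_image_part, parts_eq_image_part]
  exact Finset.image_congr fun i _ => h i

lemma ofMM_toMM {n : ℕ} (P : Finpartition (Finset.univ : Finset (Fin n))) :
    ofMM (toMM P) = P := by
  apply finpartition_ext
  intro i
  ext b
  rw [mem_part_ofMM]
  show minMap P i = minMap P b ↔ _
  constructor
  · intro h
    have : P.part (minMap P i) = P.part (minMap P b) := by rw [h]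
    rw [part_minMap, part_minMap] at this
    rw [this]
    exact P.mem_part (Finset.mem_univ b)
  · intro hb
    have : P.part b = P.part i := P.part_eq_of_mem (P.part_mem.2 (Finset.mem_univ i)) hb
    unfold minMap
    congr 1
    exact this.symm

noncomputable def partEquiv (n : ℕ) :
    Finpartition (Finset.univ : Finset (Fin n)) ≃ MM n where
  toFun := toMM
  invFun := ofMM
  left_inv := ofMM_toMM
  right_inv := fun f => Subtype.ext (minMap_ofMM f)

lemma minMap_eq_min'_part {n : ℕ} (P : Finpartition (Finset.univ : Finset (Fin n)))
    {B : Finset (Fin n)} (hB : B ∈ P.parts) {i : Fin n} (hi : i ∈ B) (h : Finset.Nonempty B) :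
    minMap P i = B.min' h := by
  unfold minMap
  congr 1
  exact P.part_eq_of_mem hB hi

lemma blockMins_eq_fixSet {n : ℕ} (P : Finpartition (Finset.univ : Finset (Fin n))) :
    blockMins P = fixSet (minMap P) := by
  ext m
  rw [mem_fixSet]
  constructor
  · intro hm
    obtain ⟨⟨B, hB⟩, -, rfl⟩ := Finset.mem_image.1 hm
    have hne : B.Nonempty := Finset.nonempty_iff_ne_empty.2 (by simpa using P.ne_bot hB)
    exact minMap_eq_min'_part P hB (B.min'_mem hne) hne
  · intro hm
    apply Finset.mem_image.2
    refine ⟨⟨P.part m, P.part_mem.2 (Finset.mem_univ m)⟩, Finset.mem_attach _ _, ?_⟩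
    exact hm

lemma card_parts_eq_card_fixSet {n : ℕ} (P : Finpartition (Finset.univ : Finset (Fin n))) :
    P.parts.card = (fixSet (minMap P)).card := by
  rw [← blockMins_eq_fixSet]
  unfold blockMins
  rw [Finset.card_image_of_injOn, Finset.card_attach]
  rintro ⟨B1, h1⟩ - ⟨B2, h2⟩ - h
  dsimp at h
  have hne1 : B1.Nonempty := Finset.nonempty_iff_ne_empty.2 (by simpa using P.ne_bot h1)
  have hne2 : B2.Nonempty := Finset.nonempty_iff_ne_empty.2 (by simpa using P.ne_bot h2)
  have : B1.min' hne1 ∈ B2 := h ▸ B2.min'_mem hne2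
  exact Subtype.ext (P.eq_of_mem_parts h1 h2 (B1.min'_mem hne1) this)

section Rec
variable {n : ℕ}

lemma val_lt_of_mm (f : MM (n + 1)) (i : Fin n) : (f.1 i.castSucc).1 < n := by
  have := f.2.1 i.castSucc
  exact lt_of_le_of_lt this i.2

/-- restriction of a min-map on `Fin (n+1)` to `Fin n`. -/
def resMM (f : MM (n + 1)) : MM n :=
  ⟨fun i => (f.1 i.castSucc).castLT (val_lt_of_mm f i), by
    constructor
    · intro i
      have := f.2.1 i.castSucc
      exact this
    · intro i
      apply Fin.ext
      have h1 : (((f.1 i.castSucc).castLT (val_lt_of_mm f i)) : Fin n).castSucc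
          = f.1 i.castSucc := by
        apply Fin.ext; simp
      simp only [Fin.coe_castLT, h1]
      rw [f.2.2 i.castSucc]⟩

lemma resMM_castSucc (f : MM (n + 1)) (i : Fin n) :
    ((resMM f).1 i).castSucc = f.1 i.castSucc := by
  apply Fin.ext; simp [resMM]

lemma mem_fixSet_resMM (f : MM (n + 1)) (i : Fin n) :
    i ∈ fixSet (resMM f).1 ↔ i.castSucc ∈ fixSet f.1 := by
  simp only [mem_fixSet]
  constructor
  · intro h
    rw [← resMM_castSucc, h]
  · intro h
    apply Fin.ext
    have := congrArg Fin.val h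
    simpa [resMM] using this

/-- extension fixing `last`. -/
def extMM₁ (f : MM n) : MM (n + 1) :=
  ⟨Fin.snoc (fun i => (f.1 i).castSucc) (Fin.last n), by
    constructor
    · intro i
      induction i using Fin.lastCases with
      | last => simp
      | cast j => simpa [Fin.snoc_castSucc] using f.2.1 j
    · intro i
      induction i using Fin.lastCases with
      | last => simp
      | cast j =>
        rw [Fin.snoc_castSucc, Fin.snoc_castSucc, f.2.2 j]⟩

/-- extension sending `last` to a fixed point `a`. -/
def extMM₂ (f : MM n) (a : Fin n) (ha : f.1 a = a) : MM (n + 1) :=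
  ⟨Fin.snoc (fun i => (f.1 i).castSucc) a.castSucc, by
    constructor
    · intro i
      induction i using Fin.lastCases with
      | last => simp [Fin.le_def]
      | cast j => simpa [Fin.snoc_castSucc] using f.2.1 j
    · intro i
      induction i using Fin.lastCases with
      | last => simp [Fin.snoc_last, Fin.snoc_castSucc, ha]
      | cast j =>
        rw [Fin.snoc_castSucc, Fin.snoc_castSucc, f.2.2 j]⟩

lemma resMM_extMM₁ (f : MM n) : resMM (extMM₁ f) = f := by
  apply Subtype.ext; funext i
  apply Fin.ext
  simp [resMM, extMM₁, Fin.snoc_castSucc]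

lemma resMM_extMM₂ (f : MM n) (a : Fin n) (ha : f.1 a = a) :
    resMM (extMM₂ f a ha) = f := by
  apply Subtype.ext; funext i
  apply Fin.ext
  simp [resMM, extMM₂, Fin.snoc_castSucc]

lemma extMM₁_resMM (f : MM (n + 1)) (h : f.1 (Fin.last n) = Fin.last n) :
    extMM₁ (resMM f) = f := by
  apply Subtype.ext; funext i
  induction i using Fin.lastCases with
  | last => simpa [extMM₁] using h.symm
  | cast j => simp [extMM₁, Fin.snoc_castSucc, resMM_castSucc]

lemma extMM₂_resMM (f : MM (n + 1)) (h : (f.1 (Fin.last n)).1 < n)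
    (hfix : ((f.1 (Fin.last n)).castLT h : Fin n) ∈ fixSet (resMM f).1) :
    extMM₂ (resMM f) ((f.1 (Fin.last n)).castLT h) (mem_fixSet.1 hfix) = f := by
  apply Subtype.ext; funext i
  induction i using Fin.lastCases with
  | last =>
    apply Fin.ext
    simp [extMM₂]
  | cast j => simp [extMM₂, Fin.snoc_castSucc, resMM_castSucc]

lemma last_mem_fixSet_resMM (f : MM (n + 1)) (_hlast : f.1 (Fin.last n) ≠ Fin.last n)
    (h : (f.1 (Fin.last n)).1 < n) :
    ((f.1 (Fin.last n)).castLT h : Fin n) ∈ fixSet (resMM f).1 := by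
  rw [mem_fixSet_resMM]
  rw [mem_fixSet]
  have : ((f.1 (Fin.last n)).castLT h : Fin n).castSucc = f.1 (Fin.last n) := by
    apply Fin.ext; simp
  rw [this, f.2.2]

lemma fixSet_eq_of_last_fixed (f : MM (n + 1)) (h : f.1 (Fin.last n) = Fin.last n) :
    fixSet f.1 = insert (Fin.last n)
      ((fixSet (resMM f).1).map Fin.castSuccEmb) := by
  ext i
  induction i using Fin.lastCases with
  | last =>
    simp [mem_fixSet, h]
  | cast j =>
    simp only [Finset.mem_insert, Finset.mem_map, Fin.castSuccEmb_apply]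
    constructor
    · intro hj
      right
      exact ⟨j, (mem_fixSet_resMM f j).2 hj, rfl⟩
    · rintro (hj | ⟨x, hx, hxj⟩)
      · exact absurd hj (Fin.castSucc_lt_last j).ne
      · have : x = j := Fin.castSucc_injective n hxj
        subst this
        exact (mem_fixSet_resMM f x).1 hx

lemma fixSet_eq_of_last_not_fixed (f : MM (n + 1)) (h : f.1 (Fin.last n) ≠ Fin.last n) :
    fixSet f.1 = (fixSet (resMM f).1).map Fin.castSuccEmb := by
  ext i
  induction i using Fin.lastCases with
  | last =>
    simp only [Finset.mem_map, Fin.castSuccEmb_apply, mem_fixSet]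
    constructor
    · intro hj; exact absurd hj h
    · rintro ⟨x, hx, hxj⟩
      exact absurd hxj (Fin.castSucc_lt_last x).ne
  | cast j =>
    simp only [Finset.mem_map, Fin.castSuccEmb_apply]
    constructor
    · intro hj
      exact ⟨j, (mem_fixSet_resMM f j).2 hj, rfl⟩
    · rintro ⟨x, hx, hxj⟩
      have : x = j := Fin.castSucc_injective n hxj
      subst this
      exact (mem_fixSet_resMM f x).1 hx

end Rec

def Pred (k : ℕ) {n : ℕ} (fg : MM n × MM n) : Prop :=
  (fixSet fg.1.1).card = k ∧ (fixSet fg.2.1).card = k ∧ fixSet fg.1.1 = fixSet fg.2.1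

noncomputable def T (n k : ℕ) : ℕ := Nat.card {fg : MM n × MM n // Pred k fg}

section Main
variable {n k : ℕ}

lemma card_fixSet_resMM_of_fixed (f : MM (n + 1)) (h : f.1 (Fin.last n) = Fin.last n) :
    (fixSet f.1).card = (fixSet (resMM f).1).card + 1 := by
  rw [fixSet_eq_of_last_fixed f h, Finset.card_insert_of_notMem, Finset.card_map]
  simp only [Finset.mem_map, Fin.castSuccEmb_apply]
  rintro ⟨x, -, hx⟩
  exact (Fin.castSucc_lt_last x).ne hx

lemma card_fixSet_resMM_of_not_fixed (f : MM (n + 1)) (h : f.1 (Fin.last n) ≠ Fin.last n) :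
    (fixSet f.1).card = (fixSet (resMM f).1).card := by
  rw [fixSet_eq_of_last_not_fixed f h, Finset.card_map]

lemma fixSet_resMM_eq (f g : MM (n + 1)) (h : fixSet f.1 = fixSet g.1) :
    fixSet (resMM f).1 = fixSet (resMM g).1 := by
  ext i
  rw [mem_fixSet_resMM, mem_fixSet_resMM, h]

lemma extMM₁_last (f : MM n) : (extMM₁ f).1 (Fin.last n) = Fin.last n := by
  simp [extMM₁]

lemma extMM₂_last (f : MM n) (a : Fin n) (ha : f.1 a = a) :
    (extMM₂ f a ha).1 (Fin.last n) = a.castSucc := by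
  simp [extMM₂]

lemma extMM₂_last_ne (f : MM n) (a : Fin n) (ha : f.1 a = a) :
    (extMM₂ f a ha).1 (Fin.last n) ≠ Fin.last n := by
  rw [extMM₂_last]; exact (Fin.castSucc_lt_last a).ne

lemma extMM₂_last_lt (f : MM n) (a : Fin n) (ha : f.1 a = a) :
    ((extMM₂ f a ha).1 (Fin.last n)).1 < n := by
  rw [extMM₂_last]; exact a.2

lemma extMM₂_last_castLT (f : MM n) (a : Fin n) (ha : f.1 a = a)
    (h : ((extMM₂ f a ha).1 (Fin.last n)).1 < n) :
    ((extMM₂ f a ha).1 (Fin.last n)).castLT h = a := by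
  apply Fin.ext
  simp [extMM₂_last]

lemma last_fixed_iff (f g : MM (n + 1)) (h3 : fixSet f.1 = fixSet g.1) :
    f.1 (Fin.last n) = Fin.last n ↔ g.1 (Fin.last n) = Fin.last n := by
  rw [← mem_fixSet, ← mem_fixSet, h3]

lemma lt_of_last_not_fixed (f : MM (n + 1)) (h : f.1 (Fin.last n) ≠ Fin.last n) :
    (f.1 (Fin.last n)).1 < n := by
  rcases lt_or_eq_of_le (Fin.le_last (f.1 (Fin.last n))) with h' | h'
  · exact h'
  · exact absurd h' h

lemma last_not_mem_map_castSucc (s : Finset (Fin n)) :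
    Fin.last n ∉ s.map Fin.castSuccEmb := by
  simp only [Finset.mem_map, Fin.castSuccEmb_apply]
  rintro ⟨x, -, hx⟩
  exact (Fin.castSucc_lt_last x).ne hx

/-- the key recursion equivalence. -/
noncomputable def recEquiv (n k : ℕ) :
    {fg : MM (n + 1) × MM (n + 1) // Pred (k + 1) fg} ≃
      {fg : MM n × MM n // Pred k fg} ⊕
      {x : (MM n × MM n) × (Fin n × Fin n) //
        Pred (k + 1) x.1 ∧ x.2.1 ∈ fixSet x.1.1.1 ∧ x.2.2 ∈ fixSet x.1.2.1} where
  toFun := fun ⟨(f, g), hp⟩ =>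
    have h1 : (fixSet f.1).card = k + 1 := hp.1
    have h2 : (fixSet g.1).card = k + 1 := hp.2.1
    have h3 : fixSet f.1 = fixSet g.1 := hp.2.2
    if hl : f.1 (Fin.last n) = Fin.last n then
      have hl' : g.1 (Fin.last n) = Fin.last n := (last_fixed_iff f g h3).1 hl
      Sum.inl ⟨(resMM f, resMM g), by
        have hf := card_fixSet_resMM_of_fixed f hl
        have hg := card_fixSet_resMM_of_fixed g hl'
        refine ⟨?_, ?_, fixSet_resMM_eq f g h3⟩
        · show (fixSet (resMM f).1).card = k; omega
        · show (fixSet (resMM g).1).card = k; omega⟩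
    else
      have hl' : g.1 (Fin.last n) ≠ Fin.last n :=
        fun h => hl ((last_fixed_iff f g h3).2 h)
      Sum.inr ⟨((resMM f, resMM g),
        ((f.1 (Fin.last n)).castLT (lt_of_last_not_fixed f hl),
         (g.1 (Fin.last n)).castLT (lt_of_last_not_fixed g hl'))), by
        have hf := card_fixSet_resMM_of_not_fixed f hl
        have hg := card_fixSet_resMM_of_not_fixed g hl'
        refine ⟨⟨?_, ?_, fixSet_resMM_eq f g h3⟩,
          last_mem_fixSet_resMM f hl _, last_mem_fixSet_resMM g hl' _⟩
        · show (fixSet (resMM f).1).card = k + 1; omega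
        · show (fixSet (resMM g).1).card = k + 1; omega⟩
  invFun := fun x =>
    match x with
    | Sum.inl ⟨(f, g), hp⟩ =>
      ⟨(extMM₁ f, extMM₁ g), by
        have h1 : (fixSet f.1).card = k := hp.1
        have h2 : (fixSet g.1).card = k := hp.2.1
        have h3 : fixSet f.1 = fixSet g.1 := hp.2.2
        have hf : fixSet (extMM₁ f).1
            = insert (Fin.last n) ((fixSet f.1).map Fin.castSuccEmb) := by
          have := fixSet_eq_of_last_fixed (extMM₁ f) (extMM₁_last f)
          rwa [resMM_extMM₁] at this
        have hg : fixSet (extMM₁ g).1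
            = insert (Fin.last n) ((fixSet g.1).map Fin.castSuccEmb) := by
          have := fixSet_eq_of_last_fixed (extMM₁ g) (extMM₁_last g)
          rwa [resMM_extMM₁] at this
        refine ⟨?_, ?_, ?_⟩
        · show (fixSet (extMM₁ f).1).card = k + 1
          rw [hf, Finset.card_insert_of_notMem (last_not_mem_map_castSucc _),
            Finset.card_map, h1]
        · show (fixSet (extMM₁ g).1).card = k + 1
          rw [hg, Finset.card_insert_of_notMem (last_not_mem_map_castSucc _),
            Finset.card_map, h2]
        · show fixSet (extMM₁ f).1 = fixSet (extMM₁ g).1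
          rw [hf, hg, h3]⟩
    | Sum.inr ⟨((f, g), (a, b)), hp⟩ =>
      ⟨(extMM₂ f a (mem_fixSet.1 hp.2.1), extMM₂ g b (mem_fixSet.1 hp.2.2)), by
        have h1 : (fixSet f.1).card = k + 1 := hp.1.1
        have h2 : (fixSet g.1).card = k + 1 := hp.1.2.1
        have h3 : fixSet f.1 = fixSet g.1 := hp.1.2.2
        have hf := fixSet_eq_of_last_not_fixed _ (extMM₂_last_ne f a (mem_fixSet.1 hp.2.1))
        have hg := fixSet_eq_of_last_not_fixed _ (extMM₂_last_ne g b (mem_fixSet.1 hp.2.2))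
        rw [resMM_extMM₂ f a (mem_fixSet.1 hp.2.1)] at hf
        rw [resMM_extMM₂ g b (mem_fixSet.1 hp.2.2)] at hg
        refine ⟨?_, ?_, ?_⟩
        · show (fixSet (extMM₂ f a (mem_fixSet.1 hp.2.1)).1).card = k + 1
          rw [hf, Finset.card_map, h1]
        · show (fixSet (extMM₂ g b (mem_fixSet.1 hp.2.2)).1).card = k + 1
          rw [hg, Finset.card_map, h2]
        · show fixSet (extMM₂ f a (mem_fixSet.1 hp.2.1)).1
            = fixSet (extMM₂ g b (mem_fixSet.1 hp.2.2)).1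
          rw [hf, hg, h3]⟩
  left_inv := by
    rintro ⟨⟨f, g⟩, hp⟩
    have h3 : fixSet f.1 = fixSet g.1 := hp.2.2
    by_cases hl : f.1 (Fin.last n) = Fin.last n
    · have hl' : g.1 (Fin.last n) = Fin.last n := (last_fixed_iff f g h3).1 hl
      simp only [hl, dif_pos]
      apply Subtype.ext
      show (extMM₁ (resMM f), extMM₁ (resMM g)) = (f, g)
      rw [extMM₁_resMM f hl, extMM₁_resMM g hl']
    · have hl' : g.1 (Fin.last n) ≠ Fin.last n :=
        fun h => hl ((last_fixed_iff f g h3).2 h)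
      simp only [hl, dif_neg, not_false_iff]
      apply Subtype.ext
      show (extMM₂ _ _ _, extMM₂ _ _ _) = (f, g)
      rw [extMM₂_resMM f _ (last_mem_fixSet_resMM f hl _),
        extMM₂_resMM g _ (last_mem_fixSet_resMM g hl' _)]
  right_inv := by
    rintro (⟨⟨f, g⟩, hp⟩ | ⟨⟨⟨f, g⟩, a, b⟩, hp⟩)
    · simp only [extMM₁_last, dif_pos]
      congr 1
      apply Subtype.ext
      show (resMM (extMM₁ f), resMM (extMM₁ g)) = (f, g)
      rw [resMM_extMM₁, resMM_extMM₁]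
    · have hl := extMM₂_last_ne f a (mem_fixSet.1 hp.2.1)
      simp only [hl, dif_neg, not_false_iff]
      congr 1
      apply Subtype.ext
      show ((resMM (extMM₂ f a _), resMM (extMM₂ g b _)),
        (((extMM₂ f a _).1 (Fin.last n)).castLT _, ((extMM₂ g b _).1 (Fin.last n)).castLT _))
        = ((f, g), (a, b))
      simp only [Prod.mk.injEq]
      exact ⟨⟨resMM_extMM₂ f a (mem_fixSet.1 hp.2.1), resMM_extMM₂ g b (mem_fixSet.1 hp.2.2)⟩,
        extMM₂_last_castLT f a (mem_fixSet.1 hp.2.1) _,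
        extMM₂_last_castLT g b (mem_fixSet.1 hp.2.2) _⟩

end Main

section Count

instance (n : ℕ) : Fintype (MM n) := by unfold MM; infer_instance

instance (n : ℕ) : Finite (MM n) := Finite.of_fintype _

lemma T_succ_succ (n k : ℕ) : T (n + 1) (k + 1) = T n k + (k + 1) ^ 2 * T n (k + 1) := by
  classical
  have h1 := Nat.card_congr (recEquiv n k)
  rw [Nat.card_sum] at h1
  rw [T, h1, T, T]
  congr 1
  -- count the second summand
  let S := {fg : MM n × MM n // Pred (k + 1) fg}
  let C := {x : (MM n × MM n) × (Fin n × Fin n) //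
    Pred (k + 1) x.1 ∧ x.2.1 ∈ fixSet x.1.1.1 ∧ x.2.2 ∈ fixSet x.1.2.1}
  have e : C ≃ Σ fg : S, ({x // x ∈ fixSet fg.1.1.1} × {x // x ∈ fixSet fg.1.2.1}) :=
    { toFun := fun x => ⟨⟨x.1.1, x.2.1⟩, ⟨x.1.2.1, x.2.2.1⟩, ⟨x.1.2.2, x.2.2.2⟩⟩
      invFun := fun y => ⟨(y.1.1, (y.2.1.1, y.2.2.1)), y.1.2, y.2.1.2, y.2.2.2⟩
      left_inv := fun x => rfl
      right_inv := fun y => rfl }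
  have : Nat.card C = Nat.card (Σ fg : S, ({x // x ∈ fixSet fg.1.1.1} × {x // x ∈ fixSet fg.1.2.1})) :=
    Nat.card_congr e
  rw [show (Nat.card C : ℕ) = Nat.card C from rfl] at this
  rw [this, Nat.card_eq_fintype_card, Fintype.card_sigma]
  have hfix : ∀ fg : S, Fintype.card ({x // x ∈ fixSet fg.1.1.1} × {x // x ∈ fixSet fg.1.2.1})
      = (k + 1) ^ 2 := by
    intro fg
    rw [Fintype.card_prod, Fintype.card_coe, Fintype.card_coe, fg.2.1, fg.2.2.1]
    ring
  rw [Finset.sum_congr rfl fun fg _ => hfix fg, Finset.sum_const, Finset.card_univ, smul_eq_mul,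
    Nat.card_eq_fintype_card]
  ring

lemma T_zero_zero : T 0 0 = 1 := by
  have f0 : MM 0 := ⟨Fin.elim0, fun i => i.elim0, fun i => i.elim0⟩
  have : Subsingleton (MM 0) := by
    constructor
    rintro ⟨f, -⟩ ⟨g, -⟩
    apply Subtype.ext
    funext i
    exact i.elim0
  have hx : Pred 0 ((f0, f0) : MM 0 × MM 0) := by
    refine ⟨?_, ?_, rfl⟩ <;>
    · rw [Finset.card_eq_zero]
      apply Finset.eq_empty_of_forall_notMem
      intro i
      exact i.elim0
  have : Unique {fg : MM 0 × MM 0 // Pred 0 fg} :=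
    { default := ⟨(f0, f0), hx⟩
      uniq := fun x => Subtype.ext (by
        apply Prod.ext <;> apply Subsingleton.elim) }
  rw [T, Nat.card_unique]

lemma T_zero_succ (k : ℕ) : T 0 (k + 1) = 0 := by
  rw [T, Nat.card_eq_zero]
  left
  constructor
  rintro ⟨⟨f, g⟩, h1, -, -⟩
  have h1' : (fixSet f.1).card = k + 1 := h1
  have : (fixSet f.1).card ≤ 0 := by
    have := Finset.card_le_univ (fixSet f.1)
    simpa using this
  omega

lemma T_succ_zero (n : ℕ) : T (n + 1) 0 = 0 := by
  rw [T, Nat.card_eq_zero]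
  left
  constructor
  rintro ⟨⟨f, g⟩, h1, -, -⟩
  have h0 : (0 : Fin (n + 1)) ∈ fixSet f.1 := by
    rw [mem_fixSet]
    exact Fin.le_zero_iff.1 (f.2.1 0)
  have : (fixSet f.1).card ≠ 0 := Finset.card_ne_zero_of_mem h0
  exact this h1

theorem U_eq_T (n k : ℕ) : U n k = T n k := by
  induction n generalizing k with
  | zero =>
    cases k with
    | zero => rw [T_zero_zero]; rfl
    | succ k => rw [T_zero_succ]; rfl
  | succ n ih =>
    cases k with
    | zero => rw [T_succ_zero]; rfl
    | succ k =>
      rw [T_succ_succ, ← ih k, ← ih (k + 1)]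
      rfl

end Count

/-- The central factorial number `U n k` is the number of ordered pairs of set partitions
of `{1,…,n}` into `k` blocks having the same set of block minima. -/
theorem stmt6 (n k : ℕ) (hk : 1 ≤ k) (hkn : k ≤ n) :
    U n k = Nat.card {pq : Finpartition (Finset.univ : Finset (Fin n)) ×
        Finpartition (Finset.univ : Finset (Fin n)) //
      pq.1.parts.card = k ∧ pq.2.parts.card = k ∧ blockMins pq.1 = blockMins pq.2} := by
  rw [U_eq_T, T]
  refine (Nat.card_congr (Equiv.subtypeEquiv ((partEquiv n).prodCongr (partEquiv n)) ?_)).symm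
  rintro ⟨P, Q⟩
  show _ ↔ Pred k (toMM P, toMM Q)
  unfold Pred
  rw [card_parts_eq_card_fixSet P, card_parts_eq_card_fixSet Q,
    blockMins_eq_fixSet P, blockMins_eq_fixSet Q]
  exact Iff.rfl
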